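/- Let (X, μ, T) be conservative and let ν be a probability measure on Y preserved by S. Then the product transformation T × S on (X × Y, μ ⊗ ν) is conservative. -/

import Mathlib

open MeasureTheory

/-- A measure-preserving invertible transformation (given as a bijection) is
*conservative* if there is no measurable set of positive measure whose iterates
`T^n A`, `n ∈ ℤ`, are pairwise disjoint. -/
def IsConservativeEquiv {α : Type*} [MeasurableSpace α] (T : Equiv.Perm α) (μ : Measure α) :
    Prop :=
  ¬ ∃ A : Set α, MeasurableSet A ∧ 0 < μ A ∧
      Pairwise fun n m : ℤ => Disjoint ((T ^ n) '' A) ((T ^ m) '' A)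

section Aux

variable {α : Type*} [MeasurableSpace α] {μ : Measure α}

/-- Natural powers of a measure-preserving permutation are measure preserving. -/
lemma measurePreserving_perm_pow (T : Equiv.Perm α) (hT : MeasurePreserving T μ μ) (k : ℕ) :
    MeasurePreserving (⇑(T ^ k)) μ μ := by
  induction k with
  | zero => simpa using MeasurePreserving.id μ
  | succ n ih =>
    have h : ⇑(T ^ (n + 1)) = ⇑(T ^ n) ∘ ⇑T := by
      ext x; simp [pow_succ, Equiv.Perm.mul_apply]
    rw [h]; exact ih.comp hT

/-- For a conservative transformation, every positive-measure set intersects some positive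
forward iterate of itself in positive measure. -/
lemma exists_pos_inter (T : Equiv.Perm α) (hT : MeasurePreserving T μ μ)
    (hcons : IsConservativeEquiv T μ)
    {B : Set α} (hB : MeasurableSet B) (hBpos : 0 < μ B) :
    ∃ k : ℕ, 0 < k ∧ 0 < μ (B ∩ ⇑(T ^ k) ⁻¹' B) := by
  by_contra h
  push_neg at h
  set N : Set α := ⋃ k : ℕ, (B ∩ ⇑(T ^ (k + 1)) ⁻¹' B) with hN
  have hNnull : μ N = 0 :=
    measure_iUnion_null fun k => le_antisymm (h (k + 1) k.succ_pos) zero_le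
  set W := B \ N with hW
  have hWm : MeasurableSet W := hB.diff (MeasurableSet.iUnion fun k =>
    hB.inter ((measurePreserving_perm_pow T hT (k + 1)).measurable hB))
  have hWpos : 0 < μ W := by
    rw [hW, measure_diff_null hNnull]; exact hBpos
  have key : ∀ b ∈ W, ∀ k : ℕ, 0 < k → ⇑(T ^ k) b ∉ W := by
    intro b hb k hk hTb
    apply hb.2
    refine Set.mem_iUnion.mpr ⟨k - 1, ?_⟩
    have hk1 : k - 1 + 1 = k := Nat.succ_pred_eq_of_pos hk
    rw [hk1]
    exact ⟨hb.1, hTb.1⟩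
  apply hcons
  refine ⟨W, hWm, hWpos, ?_⟩
  have main : ∀ n m : ℤ, n < m → Disjoint (⇑(T ^ n) '' W) (⇑(T ^ m) '' W) := by
    intro n m hnm
    rw [Set.disjoint_left]
    rintro u ⟨a, ha, rfl⟩ ⟨b, hb, hba⟩
    set k : ℕ := (m - n).toNat with hkdef
    have hkz : (k : ℤ) = m - n := Int.toNat_of_nonneg (by omega)
    have hkpos : 0 < k := by omega
    have h1 : ⇑(T ^ k) b = a := by
      have h2 := congrArg (⇑(T ^ (-n))) hba
      rw [← Equiv.Perm.mul_apply, ← Equiv.Perm.mul_apply, ← zpow_add, ← zpow_add,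
        neg_add_cancel, zpow_zero, Equiv.Perm.one_apply] at h2
      rw [← zpow_natCast, hkz]
      rw [show -n + m = m - n by ring] at h2
      exact h2
    exact key b hb k hkpos (h1 ▸ ha)
  intro n m hnm
  rcases hnm.lt_or_gt with h' | h'
  · exact main n m h'
  · exact (main m n h').symm

/-- Iterating `exists_pos_inter`: a positive-measure set admits arbitrarily many iterates
with a common positive-measure "core". -/
lemma exists_many (T : Equiv.Perm α) (hT : MeasurePreserving T μ μ)
    (hcons : IsConservativeEquiv T μ)
    {B : Set α} (hB : MeasurableSet B) (hBpos : 0 < μ B) (Nn : ℕ) :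
    ∃ s : Finset ℕ, Nn + 1 ≤ s.card ∧ ∃ C : Set α, MeasurableSet C ∧ 0 < μ C ∧
      ∀ m ∈ s, C ⊆ ⇑(T ^ m) ⁻¹' B := by
  induction Nn with
  | zero =>
    refine ⟨{0}, by simp, B, hB, hBpos, ?_⟩
    intro m hm
    simp only [Finset.mem_singleton] at hm
    subst hm
    simp
  | succ n ih =>
    obtain ⟨s, hcard, C, hC, hCpos, hsub⟩ := ih
    obtain ⟨k, hk, hpos⟩ := exists_pos_inter T hT hcons hC hCpos
    have hsne : s.Nonempty := Finset.card_pos.mp (by omega)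
    set M := s.max' hsne with hM
    refine ⟨s ∪ s.image (· + k), ?_, C ∩ ⇑(T ^ k) ⁻¹' C,
      hC.inter ((measurePreserving_perm_pow T hT k).measurable hC), hpos, ?_⟩
    · have hss : s ⊂ s ∪ s.image (· + k) := by
        refine (Finset.ssubset_iff_of_subset Finset.subset_union_left).mpr ?_
        refine ⟨M + k, Finset.mem_union_right _ (Finset.mem_image.mpr ⟨M, s.max'_mem hsne, rfl⟩),
          fun hmem => ?_⟩
        have := Finset.le_max' s _ hmem
        omega
      have := Finset.card_lt_card hss
      omega
    · intro m hm
      rcases Finset.mem_union.mp hm with hm | hm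
      · exact Set.inter_subset_left.trans (hsub m hm)
      · obtain ⟨j, hj, rfl⟩ := Finset.mem_image.mp hm
        refine Set.inter_subset_right.trans ?_
        intro z hz
        have h1 : ⇑(T ^ k) z ∈ ⇑(T ^ j) ⁻¹' B := hsub j hj hz
        show ⇑(T ^ (j + k)) z ∈ B
        have he : ⇑(T ^ (j + k)) z = ⇑(T ^ j) (⇑(T ^ k) z) := by
          rw [pow_add, Equiv.Perm.mul_apply]
        rw [he]; exact h1

omit [MeasurableSpace α] in
lemma prodCongr_pow_apply {β : Type*} (T : Equiv.Perm α) (S : Equiv.Perm β) (m : ℕ)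
    (x : α) (y : β) :
    ((Equiv.prodCongr T S) ^ m) (x, y) = ((T ^ m) x, (S ^ m) y) := by
  induction m with
  | zero => simp
  | succ n ih =>
    rw [pow_succ', Equiv.Perm.mul_apply, ih, pow_succ', pow_succ',
      Equiv.Perm.mul_apply, Equiv.Perm.mul_apply]
    rfl

end Aux

/-- If `(X, μ, T)` is conservative with `μ` σ-finite and `S` preserves a probability
measure `ν` on `Y`, then `T × S` is conservative on `(X × Y, μ ⊗ ν)`. -/
theorem prod_conservative_of_conservative
    {X Y : Type*} [MeasurableSpace X] [MeasurableSpace Y]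
    (μ : Measure X) [SigmaFinite μ] (ν : Measure Y) [IsProbabilityMeasure ν]
    (T : Equiv.Perm X) (hT : MeasurePreserving T μ μ)
    (S : Equiv.Perm Y) (hS : MeasurePreserving S ν ν)
    (hcons : IsConservativeEquiv T μ) :
    IsConservativeEquiv (Equiv.prodCongr T S) (μ.prod ν) := by
  rintro ⟨A, hA, hApos, hdisj⟩
  set P := Equiv.prodCongr T S with hP
  set f : X → ENNReal := fun x => ν (Prod.mk x ⁻¹' A) with hfdef
  have hfm : Measurable f := measurable_measure_prodMk_left hA
  rw [Measure.prod_apply hA] at hApos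
  have hex : ∃ ε : ENNReal, 0 < ε ∧ 0 < μ {x | ε < f x} := by
    by_contra hcon
    push_neg at hcon
    have hnull : μ {x | 0 < f x} = 0 := by
      have hsub : {x | 0 < f x} ⊆ ⋃ n : ℕ, {x | ((n : ENNReal))⁻¹ < f x} := by
        intro x hx
        obtain ⟨n, hn⟩ := ENNReal.exists_inv_nat_lt (ne_of_gt hx)
        exact Set.mem_iUnion.mpr ⟨n, hn⟩
      refine measure_mono_null hsub (measure_iUnion_null fun n => ?_)
      exact le_antisymm
        (hcon _ (ENNReal.inv_pos.mpr (ENNReal.natCast_ne_top n))) zero_le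
    have hz : ∫⁻ x, f x ∂μ = 0 := by
      rw [lintegral_eq_zero_iff hfm]
      rw [Filter.EventuallyEq, ae_iff]
      simpa [pos_iff_ne_zero] using hnull
    rw [hz] at hApos
    exact lt_irrefl _ hApos
  obtain ⟨ε, hε, hBpos⟩ := hex
  set B := {x | ε < f x} with hBdef
  have hBm : MeasurableSet B := measurableSet_lt measurable_const hfm
  obtain ⟨Nn, hNn⟩ := ENNReal.exists_nat_gt (ENNReal.inv_ne_top.mpr hε.ne')
  obtain ⟨s, hcard, C, hCm, hCpos, hsub⟩ := exists_many T hT hcons hBm hBpos Nn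
  obtain ⟨x, hx⟩ := nonempty_of_measure_ne_zero hCpos.ne'
  set D : ℕ → Set Y := fun m => ⇑(S ^ m) ⁻¹' (Prod.mk ((T ^ m) x) ⁻¹' A) with hD
  have hDm : ∀ m, MeasurableSet (D m) := fun m =>
    (measurePreserving_perm_pow S hS m).measurable (measurable_prodMk_left hA)
  have hDmeas : ∀ m ∈ s, ε < ν (D m) := by
    intro m hm
    have h1 : ν (D m) = f ((T ^ m) x) :=
      (measurePreserving_perm_pow S hS m).measure_preimage
        (measurable_prodMk_left hA).nullMeasurableSet
    rw [h1]
    exact hsub m hm hx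
  have keyD : ∀ k : ℕ, D k = Prod.mk x ⁻¹' (⇑(P ^ (-(k : ℤ))) '' A) := by
    intro k
    have hsymm : (P ^ (-(k : ℤ))).symm = P ^ k := by
      rw [← Equiv.Perm.inv_def, zpow_neg, inv_inv, zpow_natCast]
    rw [Equiv.image_eq_preimage_symm, hsymm]
    ext y
    simp only [hD, Set.mem_preimage]
    rw [hP, prodCongr_pow_apply]
  have hDdisj : (↑s : Set ℕ).PairwiseDisjoint D := by
    intro m hm m' hm' hne
    have hne' : (-(m : ℤ)) ≠ (-(m' : ℤ)) := by
      simp only [neg_inj, Ne, Int.natCast_inj]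
      exact hne
    have hd := hdisj hne'
    rw [Function.onFun, keyD m, keyD m']
    exact Disjoint.preimage _ hd
  have hunion : ν (⋃ m ∈ s, D m) = ∑ m ∈ s, ν (D m) :=
    measure_biUnion_finset hDdisj (fun m _ => hDm m)
  have h1 : ((Nn : ENNReal) + 1) * ε ≤ ∑ m ∈ s, ν (D m) := by
    calc ((Nn : ENNReal) + 1) * ε ≤ (s.card : ENNReal) * ε := by
          apply mul_le_mul_left
          have : ((Nn + 1 : ℕ) : ENNReal) ≤ (s.card : ENNReal) := by
            exact_mod_cast hcard
          simpa using this
      _ ≤ ∑ m ∈ s, ν (D m) := by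
          have h2 := Finset.card_nsmul_le_sum s (fun m => ν (D m)) ε
            (fun m hm => (hDmeas m hm).le)
          simpa [nsmul_eq_mul] using h2
  have h2 : 1 < ((Nn : ENNReal) + 1) * ε := by
    have hlt : ((Nn : ENNReal) + 1)⁻¹ < ε := by
      rw [← ENNReal.inv_lt_iff_inv_lt]
      exact lt_of_lt_of_le hNn (by simp)
    have hne0 : ((Nn : ENNReal) + 1) ≠ 0 := by simp
    have hnetop : ((Nn : ENNReal) + 1) ≠ ⊤ := by simp [ENNReal.add_ne_top]
    calc (1 : ENNReal) = ((Nn : ENNReal) + 1) * ((Nn : ENNReal) + 1)⁻¹ :=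
          (ENNReal.mul_inv_cancel hne0 hnetop).symm
      _ < ((Nn : ENNReal) + 1) * ε := by
          exact (ENNReal.mul_lt_mul_iff_right hne0 hnetop).mpr hlt
  have h3 : ν (⋃ m ∈ s, D m) ≤ 1 := prob_le_one
  rw [hunion] at h3
  exact absurd (h2.trans_le h1) (not_lt.mpr h3)
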